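/- In synchronous majority dynamics with the constant edge weighting z ≡ 1 on an infinite locally finite graph with odd degrees, starting from a configuration where only finitely many vertices have opinion +1, the functional L_t = (1/4) ∑_{(i,j)∈E} (A^i_{t+1} − A^j_t)^2 is finite for all t, integer-valued, non-increasing, and decreases by at least 1 whenever some vertex i has A^i_{t+1} ≠ A^i_{t−1}. -/

import Mathlib

set_option linter.unusedSectionVars false
set_option linter.unnecessarySimpa false
set_option maxHeartbeats 1000000

open Finset

namespace Stmt11Aux

variable {V : Type*} [DecidableEq V] (G : SimpleGraph V) [∀ v : V, Fintype (G.neighborSet v)]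

lemma core_aux (F : V → V → ℝ) (s : Finset V)
    (h : ∀ i ∉ s, ∀ j ∈ G.neighborFinset i, F i j = 0) :
    Summable (fun p : {p : V × V // G.Adj p.1 p.2} => F p.1.1 p.1.2) ∧
    ∑' p : {p : V × V // G.Adj p.1 p.2}, F p.1.1 p.1.2
      = ∑ i ∈ s, ∑ j ∈ G.neighborFinset i, F i j := by
  classical
  let e : {p : V × V // G.Adj p.1 p.2} ≃ (Σ i : V, {j // j ∈ G.neighborFinset i}) :=
    { toFun := fun p => ⟨p.1.1, ⟨p.1.2, (G.mem_neighborFinset _ _).mpr p.2⟩⟩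
      invFun := fun x => ⟨(x.1, x.2.1), (G.mem_neighborFinset _ _).mp x.2.2⟩
      left_inv := fun p => rfl
      right_inv := fun x => rfl }
  let F' : (Σ i : V, {j // j ∈ G.neighborFinset i}) → ℝ := fun x => F x.1 x.2.1
  let T : Finset (Σ i : V, {j // j ∈ G.neighborFinset i}) :=
    s.sigma (fun i => Finset.univ)
  have hvan : ∀ x ∉ T, F' x = 0 := by
    intro x hx
    simp only [T, Finset.mem_sigma, Finset.mem_univ, and_true] at hx
    exact h x.1 hx x.2.1 x.2.2
  have hsum' : Summable F' := summable_of_ne_finset_zero hvan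
  have htsum' : ∑' x, F' x = ∑ x ∈ T, F' x := tsum_eq_sum hvan
  have hTsum : ∑ x ∈ T, F' x = ∑ i ∈ s, ∑ j ∈ G.neighborFinset i, F i j := by
    rw [Finset.sum_sigma]
    refine Finset.sum_congr rfl fun i _ => ?_
    rw [Finset.univ_eq_attach, ← Finset.sum_attach (G.neighborFinset i) (fun j => F i j)]
  have hcomp : (fun p : {p : V × V // G.Adj p.1 p.2} => F p.1.1 p.1.2) = F' ∘ e := rfl
  constructor
  · rw [hcomp]; exact hsum'.comp_injective e.injective
  · rw [hcomp]
    rw [Function.comp_def]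
    calc ∑' p, F' (e p) = ∑' x, F' x := e.tsum_eq F'
      _ = _ := by rw [htsum', hTsum]

lemma swap_aux (F : V → V → ℝ) :
    ∑' p : {p : V × V // G.Adj p.1 p.2}, F p.1.1 p.1.2
      = ∑' p : {p : V × V // G.Adj p.1 p.2}, F p.1.2 p.1.1 := by
  let e : {p : V × V // G.Adj p.1 p.2} ≃ {p : V × V // G.Adj p.1 p.2} :=
    { toFun := fun p => ⟨(p.1.2, p.1.1), p.2.symm⟩
      invFun := fun p => ⟨(p.1.2, p.1.1), p.2.symm⟩
      left_inv := fun p => rfl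
      right_inv := fun p => rfl }
  exact (e.tsum_eq (fun p => F p.1.1 p.1.2)).symm

lemma swapsum_aux (F : V → V → ℝ) (s : Finset V)
    (h1 : ∀ i ∉ s, ∀ j ∈ G.neighborFinset i, F i j = 0)
    (h2 : ∀ i ∉ s, ∀ j ∈ G.neighborFinset i, F j i = 0) :
    ∑ i ∈ s, ∑ j ∈ G.neighborFinset i, F i j
      = ∑ i ∈ s, ∑ j ∈ G.neighborFinset i, F j i := by
  have c1 := core_aux G F s h1
  have c2 := core_aux G (fun i j => F j i) s h2
  rw [← c1.2, ← c2.2]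
  exact swap_aux G F

variable (W : Finset V) (A : ℕ → V → ℤ)

def reach : ℕ → Finset V := fun n =>
  Nat.rec W (fun _ s => s ∪ s.biUnion (fun v => G.neighborFinset v)) n

lemma reach_mono {m n : ℕ} (h : m ≤ n) : reach G W m ⊆ reach G W n := by
  induction n with
  | zero => simpa [Nat.le_zero.mp h]
  | succ n ih =>
    rcases Nat.lt_or_ge m (n+1) with h' | h'
    · exact (ih (Nat.lt_succ_iff.mp h')).trans (Finset.subset_union_left)
    · have : m = n + 1 := le_antisymm h h'
      subst this; rfl

lemma reach_adj {n : ℕ} {i j : V} (hij : G.Adj i j) (hj : j ∈ reach G W n) :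
    i ∈ reach G W (n + 1) := by
  refine Finset.mem_union_right _ (Finset.mem_biUnion.mpr ⟨j, hj, ?_⟩)
  exact (G.mem_neighborFinset _ _).mpr hij.symm

section dyn
variable (hA0 : ∀ v, A 0 v = if v ∈ W then 1 else -1)
  (hdyn : ∀ t v, A (t + 1) v = if 0 < ∑ j ∈ G.neighborFinset v, A t j then 1 else -1)
include hA0 hdyn

lemma A_pm : ∀ t v, A t v = 1 ∨ A t v = -1 := by
  intro t v
  cases t with
  | zero => rw [hA0]; split <;> simp
  | succ t => rw [hdyn]; split <;> simp

lemma A_sq (t : ℕ) (v : V) : ((A t v : ℝ)) ^ 2 = 1 := by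
  rcases A_pm G W A hA0 hdyn t v with h | h <;> rw [h] <;> norm_num

lemma A_outside : ∀ t v, v ∉ reach G W t → A t v = -1 := by
  intro t
  induction t with
  | zero => intro v hv; rw [hA0]; simp [reach] at hv; simp [hv]
  | succ t ih =>
    intro v hv
    have hv' : ∀ j ∈ G.neighborFinset v, j ∉ reach G W t := by
      intro j hj hjn
      exact hv (reach_adj G W ((G.mem_neighborFinset _ _).mp hj) hjn)
    have hsum : ∑ j ∈ G.neighborFinset v, A t j = -(G.neighborFinset v).card := by
      rw [Finset.sum_congr rfl (fun j hj => ih j (hv' j hj))]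
      simp
    rw [hdyn, hsum, if_neg]
    simp

lemma lrep (t : ℕ) (s : Finset V) (hs : reach G W (t + 1) ⊆ s) :
    Summable (fun p : {p : V × V // G.Adj p.1 p.2} =>
        ((A (t + 1) p.1.1 : ℝ) - (A t p.1.2 : ℝ)) ^ 2) ∧
    ∑' p : {p : V × V // G.Adj p.1 p.2}, ((A (t + 1) p.1.1 : ℝ) - (A t p.1.2 : ℝ)) ^ 2
      = ∑ i ∈ s, ∑ j ∈ G.neighborFinset i,
          ((A (t + 1) i : ℝ) - (A t j : ℝ)) ^ 2 := by
  refine core_aux G (fun i j => ((A (t + 1) i : ℝ) - (A t j : ℝ)) ^ 2) s ?_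
  intro i hi j hj
  show ((A (t + 1) i : ℝ) - (A t j : ℝ)) ^ 2 = 0
  have hi1 : i ∉ reach G W (t + 1) := fun h => hi (hs h)
  have hAi : A (t + 1) i = -1 := A_outside G W A hA0 hdyn (t + 1) i hi1
  have hAj : A t j = -1 := by
    refine A_outside G W A hA0 hdyn t j (fun hjr => hi1 ?_)
    exact reach_adj G W ((G.mem_neighborFinset _ _).mp hj) hjr
  rw [hAi, hAj]
  norm_num

lemma odd_S (hodd : ∀ v, Odd (G.degree v)) (t : ℕ) (i : V) :
    Odd (∑ j ∈ G.neighborFinset i, A (t + 1) j) := by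
  have h1 : ∀ j ∈ G.neighborFinset i, A (t + 1) j % 2 = 1 := by
    intro j _
    rcases A_pm G W A hA0 hdyn (t + 1) j with h | h <;> rw [h] <;> decide
  rw [Int.odd_iff, Finset.sum_int_mod, Finset.sum_congr rfl h1, Finset.sum_const,
    nsmul_eq_mul, mul_one]
  obtain ⟨k, hk⟩ := hodd i
  have hdeg : G.degree i = (G.neighborFinset i).card := rfl
  rw [hdeg] at hk
  omega

lemma pervertex (hodd : ∀ v, Odd (G.degree v)) (t : ℕ) (i : V) :
    0 ≤ (A (t + 2) i - A t i) * ∑ j ∈ G.neighborFinset i, A (t + 1) j ∧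
    (A (t + 2) i ≠ A t i →
      2 ≤ (A (t + 2) i - A t i) * ∑ j ∈ G.neighborFinset i, A (t + 1) j) := by
  set S := ∑ j ∈ G.neighborFinset i, A (t + 1) j with hS
  have hc : A (t + 2) i = if 0 < S then 1 else -1 := hdyn (t + 1) i
  have hOdd : Odd S := odd_S G W A hA0 hdyn hodd t i
  have hSne : S ≠ 0 := by
    intro h0; obtain ⟨k, hk⟩ := hOdd; omega
  by_cases hpos : 0 < S
  · rw [hc, if_pos hpos]
    rcases A_pm G W A hA0 hdyn t i with ha | ha <;> rw [ha]
    · constructor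
      · simp
      · intro hne; exact absurd rfl hne
    · constructor
      · nlinarith
      · intro _; nlinarith
  · have hSneg : S ≤ -1 := by omega
    rw [hc, if_neg hpos]
    rcases A_pm G W A hA0 hdyn t i with ha | ha <;> rw [ha]
    · constructor
      · nlinarith
      · intro _; nlinarith
    · constructor
      · simp
      · intro hne; exact absurd rfl hne

lemma step_aux (hodd : ∀ v, Odd (G.degree v)) (t : ℕ) :
    ((1 / 4 : ℝ) * ∑' p : {p : V × V // G.Adj p.1 p.2},
        ((A (t + 1) p.1.1 : ℝ) - (A t p.1.2 : ℝ)) ^ 2)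
    - ((1 / 4 : ℝ) * ∑' p : {p : V × V // G.Adj p.1 p.2},
        ((A (t + 2) p.1.1 : ℝ) - (A (t + 1) p.1.2 : ℝ)) ^ 2)
    = (1 / 2 : ℝ) * ((∑ i ∈ reach G W (t + 3),
        (A (t + 2) i - A t i) * ∑ j ∈ G.neighborFinset i, A (t + 1) j : ℤ) : ℝ) := by
  set s : Finset V := reach G W (t + 3) with hsdef
  have r1 := (lrep G W A hA0 hdyn t s (reach_mono G W (by omega))).2
  have r2 : (∑' p : {p : V × V // G.Adj p.1 p.2},
        ((A (t + 2) p.1.1 : ℝ) - (A (t + 1) p.1.2 : ℝ)) ^ 2)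
      = ∑ i ∈ s, ∑ j ∈ G.neighborFinset i,
          ((A (t + 2) i : ℝ) - (A (t + 1) j : ℝ)) ^ 2 :=
    (lrep G W A hA0 hdyn (t + 1) s (reach_mono G W (by omega))).2
  have hvals : ∀ i ∉ s, ∀ j ∈ G.neighborFinset i,
      A t i = -1 ∧ A (t + 1) i = -1 ∧ A t j = -1 ∧ A (t + 1) j = -1 := by
    intro i hi j hj
    have hadj : G.Adj i j := (G.mem_neighborFinset _ _).mp hj
    refine ⟨?_, ?_, ?_, ?_⟩
    · exact A_outside G W A hA0 hdyn t i
        (fun h => hi (reach_mono G W (by omega) h))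
    · exact A_outside G W A hA0 hdyn (t + 1) i
        (fun h => hi (reach_mono G W (by omega) h))
    · exact A_outside G W A hA0 hdyn t j
        (fun h => hi (reach_mono G W (by omega) (reach_adj G W hadj h)))
    · exact A_outside G W A hA0 hdyn (t + 1) j
        (fun h => hi (reach_mono G W (by omega) (reach_adj G W hadj h)))
  have hzero : ∑ i ∈ s, ∑ j ∈ G.neighborFinset i,
      ((A (t + 1) i : ℝ) * (A t j : ℝ) - (A t i : ℝ) * (A (t + 1) j : ℝ)) = 0 := by
    have hvan : ∀ i ∉ s, ∀ j ∈ G.neighborFinset i,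
        ((A (t + 1) i : ℝ) * (A t j : ℝ) - (A t i : ℝ) * (A (t + 1) j : ℝ)) = 0 := by
      intro i hi j hj
      obtain ⟨h1, h2, h3, h4⟩ := hvals i hi j hj
      rw [h1, h2, h3, h4]; push_cast; ring
    have hvan2 : ∀ i ∉ s, ∀ j ∈ G.neighborFinset i,
        ((A (t + 1) j : ℝ) * (A t i : ℝ) - (A t j : ℝ) * (A (t + 1) i : ℝ)) = 0 := by
      intro i hi j hj
      obtain ⟨h1, h2, h3, h4⟩ := hvals i hi j hj
      rw [h1, h2, h3, h4]; push_cast; ring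
    have hswap := swapsum_aux G
      (fun i j => ((A (t + 1) i : ℝ) * (A t j : ℝ) - (A t i : ℝ) * (A (t + 1) j : ℝ)))
      s hvan hvan2
    have hneg : ∑ i ∈ s, ∑ j ∈ G.neighborFinset i,
        ((A (t + 1) j : ℝ) * (A t i : ℝ) - (A t j : ℝ) * (A (t + 1) i : ℝ))
        = - ∑ i ∈ s, ∑ j ∈ G.neighborFinset i,
        ((A (t + 1) i : ℝ) * (A t j : ℝ) - (A t i : ℝ) * (A (t + 1) j : ℝ)) := by
      rw [← Finset.sum_neg_distrib]
      refine Finset.sum_congr rfl fun i _ => ?_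
      rw [← Finset.sum_neg_distrib]
      refine Finset.sum_congr rfl fun j _ => ?_
      ring
    rw [hneg] at hswap
    linarith
  have e1 : ∑ i ∈ s, ∑ j ∈ G.neighborFinset i, ((A (t + 1) i : ℝ) - (A t j : ℝ)) ^ 2
      - ∑ i ∈ s, ∑ j ∈ G.neighborFinset i,
          ((A (t + 2) i : ℝ) - (A (t + 1) j : ℝ)) ^ 2
      = ∑ i ∈ s, ∑ j ∈ G.neighborFinset i,
          (2 * (((A (t + 2) i : ℝ) - (A t i : ℝ)) * (A (t + 1) j : ℝ))
            - 2 * ((A (t + 1) i : ℝ) * (A t j : ℝ) - (A t i : ℝ) * (A (t + 1) j : ℝ))) := by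
    rw [← Finset.sum_sub_distrib]
    refine Finset.sum_congr rfl fun i _ => ?_
    rw [← Finset.sum_sub_distrib]
    refine Finset.sum_congr rfl fun j _ => ?_
    have s1 := A_sq G W A hA0 hdyn (t + 1) i
    have s2 := A_sq G W A hA0 hdyn t j
    have s3 := A_sq G W A hA0 hdyn (t + 2) i
    have s4 := A_sq G W A hA0 hdyn (t + 1) j
    linear_combination s1 + s2 - s3 - s4
  have main : ∑ i ∈ s, ∑ j ∈ G.neighborFinset i, ((A (t + 1) i : ℝ) - (A t j : ℝ)) ^ 2
      - ∑ i ∈ s, ∑ j ∈ G.neighborFinset i,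
          ((A (t + 2) i : ℝ) - (A (t + 1) j : ℝ)) ^ 2
      = 2 * ∑ i ∈ s, ((A (t + 2) i : ℝ) - (A t i : ℝ))
          * ∑ j ∈ G.neighborFinset i, (A (t + 1) j : ℝ) := by
    rw [e1]
    simp only [Finset.sum_sub_distrib, ← Finset.mul_sum] at hzero ⊢
    linarith
  have hcast : ((∑ i ∈ s,
        (A (t + 2) i - A t i) * ∑ j ∈ G.neighborFinset i, A (t + 1) j : ℤ) : ℝ)
      = ∑ i ∈ s, ((A (t + 2) i : ℝ) - (A t i : ℝ))
          * ∑ j ∈ G.neighborFinset i, (A (t + 1) j : ℝ) := by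
    push_cast; ring
  rw [r1, r2, ← mul_sub, main, hcast]
  ring

end dyn
end Stmt11Aux


open Stmt11Aux


/-- With the constant edge weighting `z ≡ 1` on an infinite locally finite
graph with odd degrees, starting from a configuration where only the finite set `W` holds
opinion `+1`, the functional `L_t = (1/4) ∑_{(i,j)∈E} (A^i_{t+1} - A^j_t)^2` (sum over
ordered adjacent pairs) is finite (the defining family is summable), integer-valued,
non-increasing, and decreases by at least `1` whenever some vertex `i` has
`A^i_{t+1} ≠ A^i_{t-1}`. -/
theorem stmt_11 {V : Type*} [Infinite V] [DecidableEq V] (G : SimpleGraph V)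
    [∀ v : V, Fintype (G.neighborSet v)]
    (hconn : G.Connected) (hodd : ∀ v, Odd (G.degree v))
    (W : Finset V)
    (A : ℕ → V → ℤ)
    (hA0 : ∀ v, A 0 v = if v ∈ W then 1 else -1)
    (hdyn : ∀ t v, A (t + 1) v =
      if 0 < ∑ j ∈ G.neighborFinset v, A t j then 1 else -1) :
    letI L : ℕ → ℝ := fun t => (1 / 4 : ℝ) * ∑' p : {p : V × V // G.Adj p.1 p.2},
      ((A (t + 1) p.1.1 : ℝ) - (A t p.1.2 : ℝ)) ^ 2
    (∀ t : ℕ, Summable (fun p : {p : V × V // G.Adj p.1 p.2} =>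
        ((A (t + 1) p.1.1 : ℝ) - (A t p.1.2 : ℝ)) ^ 2)) ∧
    (∀ t : ℕ, ∃ n : ℤ, L t = (n : ℝ)) ∧
    Antitone L ∧
    (∀ t : ℕ, (∃ v : V, A (t + 2) v ≠ A t v) → L (t + 1) ≤ L t - 1) := by
  let D : ℕ → ℤ := fun t => ∑ i ∈ reach G W (t + 3),
      (A (t + 2) i - A t i) * ∑ j ∈ G.neighborFinset i, A (t + 1) j
  have hstep : ∀ t, ((1 / 4 : ℝ) * ∑' p : {p : V × V // G.Adj p.1 p.2},
        ((A (t + 1) p.1.1 : ℝ) - (A t p.1.2 : ℝ)) ^ 2)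
      - ((1 / 4 : ℝ) * ∑' p : {p : V × V // G.Adj p.1 p.2},
        ((A (t + 2) p.1.1 : ℝ) - (A (t + 1) p.1.2 : ℝ)) ^ 2)
      = (1 / 2 : ℝ) * ((D t : ℤ) : ℝ) := fun t => step_aux G W A hA0 hdyn hodd t
  have hDnonneg : ∀ t, 0 ≤ D t := fun t =>
    Finset.sum_nonneg fun i _ => (pervertex G W A hA0 hdyn hodd t i).1
  refine ⟨?_, ?_, ?_, ?_⟩
  · intro t
    exact (lrep G W A hA0 hdyn t _ subset_rfl).1
  · intro t
    refine ⟨∑ i ∈ reach G W (t + 1), ∑ j ∈ G.neighborFinset i,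
        (if A (t + 1) i = A t j then 0 else 1 : ℤ), ?_⟩
    show ((1 / 4 : ℝ) * ∑' p : {p : V × V // G.Adj p.1 p.2},
        ((A (t + 1) p.1.1 : ℝ) - (A t p.1.2 : ℝ)) ^ 2) = _
    rw [(lrep G W A hA0 hdyn t _ subset_rfl).2]
    push_cast
    rw [Finset.mul_sum]
    refine Finset.sum_congr rfl fun i _ => ?_
    rw [Finset.mul_sum]
    refine Finset.sum_congr rfl fun j _ => ?_
    rcases A_pm G W A hA0 hdyn (t + 1) i with h1 | h1 <;>
      rcases A_pm G W A hA0 hdyn t j with h2 | h2 <;> rw [h1, h2] <;> norm_num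
  · refine antitone_nat_of_succ_le fun t => ?_
    show ((1 / 4 : ℝ) * ∑' p : {p : V × V // G.Adj p.1 p.2},
        ((A (t + 2) p.1.1 : ℝ) - (A (t + 1) p.1.2 : ℝ)) ^ 2)
      ≤ ((1 / 4 : ℝ) * ∑' p : {p : V × V // G.Adj p.1 p.2},
        ((A (t + 1) p.1.1 : ℝ) - (A t p.1.2 : ℝ)) ^ 2)
    have h1 := hstep t
    have h2 : (0 : ℝ) ≤ ((D t : ℤ) : ℝ) := by exact_mod_cast hDnonneg t
    linarith
  · intro t hv
    obtain ⟨v, hv⟩ := hv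
    show ((1 / 4 : ℝ) * ∑' p : {p : V × V // G.Adj p.1 p.2},
        ((A (t + 2) p.1.1 : ℝ) - (A (t + 1) p.1.2 : ℝ)) ^ 2)
      ≤ ((1 / 4 : ℝ) * ∑' p : {p : V × V // G.Adj p.1 p.2},
        ((A (t + 1) p.1.1 : ℝ) - (A t p.1.2 : ℝ)) ^ 2) - 1
    have hvmem : v ∈ reach G W (t + 3) := by
      by_contra hvn
      apply hv
      rw [A_outside G W A hA0 hdyn (t + 2) v
            (fun h => hvn (reach_mono G W (by omega) h)),
          A_outside G W A hA0 hdyn t v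
            (fun h => hvn (reach_mono G W (by omega) h))]
    have h2 : 2 ≤ (A (t + 2) v - A t v) * ∑ j ∈ G.neighborFinset v, A (t + 1) j :=
      (pervertex G W A hA0 hdyn hodd t v).2 hv
    have hD2 : 2 ≤ D t :=
      le_trans h2 (Finset.single_le_sum
        (fun i _ => (pervertex G W A hA0 hdyn hodd t i).1) hvmem)
    have h1 := hstep t
    have h3 : (2 : ℝ) ≤ ((D t : ℤ) : ℝ) := by exact_mod_cast hD2
    linarith
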